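/- For n ≥ 4, the cardinality of RD*_n is 2^n − (n³ + 5n + 6)/6. -/

import Mathlib

open Finset

namespace ORDPaper

/-- `f` is a full transformation of the chain `{1,…,n}`, acting as the identity outside. -/
def IsTrans (n : ℕ) (f : ℕ → ℕ) : Prop :=
  (∀ x, 1 ≤ x → x ≤ n → 1 ≤ f x ∧ f x ≤ n) ∧ ∀ x, ¬(1 ≤ x ∧ x ≤ n) → f x = x

/-- Composition of transformations, written left to right: `x(αβ) = (xα)β`. -/
def comp (f g : ℕ → ℕ) : ℕ → ℕ := fun x => g (f x)

/-- The value of `f` at the cyclic successor of `i` (so `(n+1)α = 1α`). -/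
def nxt (n : ℕ) (f : ℕ → ℕ) (i : ℕ) : ℕ := if i = n then f 1 else f (i + 1)

/-- `(1α,…,nα)` is cyclic: there is at most one descent (cyclically). -/
def Cyclic (n : ℕ) (f : ℕ → ℕ) : Prop :=
  ((Finset.Icc 1 n).filter (fun i => nxt n f i < f i)).card ≤ 1

/-- `(1α,…,nα)` is anti-cyclic: there is at most one ascent (cyclically). -/
def AntiCyclic (n : ℕ) (f : ℕ → ℕ) : Prop :=
  ((Finset.Icc 1 n).filter (fun i => f i < nxt n f i)).card ≤ 1

/-- Order-decreasing on `{1,…,n}`. -/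
def Decreasing (n : ℕ) (f : ℕ → ℕ) : Prop := ∀ x, 1 ≤ x → x ≤ n → f x ≤ x

/-- Image of `{1,…,n}` under `f`. -/
def im (n : ℕ) (f : ℕ → ℕ) : Finset ℕ := (Finset.Icc 1 n).image f

/-- Fixed points of `f` in `{1,…,n}`. -/
def fixSet (n : ℕ) (f : ℕ → ℕ) : Finset ℕ := (Finset.Icc 1 n).filter (fun x => f x = x)

/-- The semigroup `D_n` of order-decreasing full transformations. -/
def Dn (n : ℕ) : Set (ℕ → ℕ) := {f | IsTrans n f ∧ Decreasing n f}

/-- Orientation-preserving order-decreasing transformations. -/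
def OPD (n : ℕ) : Set (ℕ → ℕ) := {f | f ∈ Dn n ∧ Cyclic n f}

/-- Oriented order-decreasing transformations. -/
def ORDn (n : ℕ) : Set (ℕ → ℕ) := {f | f ∈ Dn n ∧ (Cyclic n f ∨ AntiCyclic n f)}

/-- `RD*_n`: orientation-reversing, order-decreasing, not orientation-preserving. -/
def RDstar (n : ℕ) : Set (ℕ → ℕ) := {f | f ∈ Dn n ∧ AntiCyclic n f ∧ ¬ Cyclic n f}

/-- `ORD(n,r)`. -/
def ORDr (n r : ℕ) : Set (ℕ → ℕ) := {f | f ∈ ORDn n ∧ (im n f).card ≤ r}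

/-- `OPD(n,r)`. -/
def OPDr (n r : ℕ) : Set (ℕ → ℕ) := {f | f ∈ OPD n ∧ (im n f).card ≤ r}

/-- The order-reversing degree: `min(X_n \ 1α⁻¹)`. -/
noncomputable def ordDeg (n : ℕ) (f : ℕ → ℕ) : ℕ := sInf {x | 1 ≤ x ∧ x ≤ n ∧ f x ≠ 1}

/-- Minimum of the preimage of `x` under `f` inside `{1,…,n}`. -/
noncomputable def preMin (n : ℕ) (f : ℕ → ℕ) (x : ℕ) : ℕ := sInf {y | 1 ≤ y ∧ y ≤ n ∧ f y = x}

/-- Membership in the subsemigroup generated by `A`. -/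
inductive gen (A : Set (ℕ → ℕ)) : (ℕ → ℕ) → Prop
  | base {f} : f ∈ A → gen A f
  | mul {f g} : gen A f → gen A g → gen A (comp f g)

/-- Rank of a transformation semigroup `S`. -/
noncomputable def rank (S : Set (ℕ → ℕ)) : ℕ :=
  sInf {k | ∃ A : Set (ℕ → ℕ), A ⊆ S ∧ A.Finite ∧ A.ncard = k ∧ {f | gen A f} = S}

/-- `r̂ = min{r, ⌈(n+1)/2⌉}`. -/
def rhat (n r : ℕ) : ℕ := min r ((n + 2) / 2)

/-- `ρ_m` fixes `1,…,m` and sends `m+1,…,n` to `1`. -/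
def rho (n m : ℕ) : ℕ → ℕ := fun x =>
  if ¬(1 ≤ x ∧ x ≤ n) then x else if x ≤ m then x else 1

/-- The order-preserving degree `opd(α) = max{m : α|_{X_m} is order-preserving}`. -/
noncomputable def opd (n : ℕ) (f : ℕ → ℕ) : ℕ :=
  sSup {m | m ≤ n ∧ ∀ x y, 1 ≤ x → x ≤ y → y ≤ m → f x ≤ f y}

/-- The set `C = (⋃_{m=r+1}^n B_m) ∪ {ρ_2,…,ρ_r}`. -/
def Cset (n r : ℕ) : Set (ℕ → ℕ) :=
  {f | (f ∈ OPD n ∧ comp f f = f ∧ (im n f).card = r ∧ r + 1 ≤ opd n f ∧ opd n f ≤ n)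
    ∨ (∃ m, 2 ≤ m ∧ m ≤ r ∧ f = rho n m)}

/-- The map `λ_{m,r}`: sends `[1,m-1]` to `1`, maps `x ∈ [m, min(2m-p-2,n)]` to `2m-x`
(where `p = max{0, m-r}` is `m - r` in truncated subtraction), and the rest of `[1,n]` to `1`. -/
def lam (n r m : ℕ) : ℕ → ℕ := fun x =>
  if ¬(1 ≤ x ∧ x ≤ n) then x
  else if x < m then 1
  else if x ≤ min (2 * m - (m - r) - 2) n then 2 * m - x
  else 1

/-- `G_{n,r} = {λ_{m,r} : 3 ≤ m ≤ n-1}`. -/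
def Gset (n r : ℕ) : Set (ℕ → ℕ) := {f | ∃ m, 3 ≤ m ∧ m ≤ n - 1 ∧ f = lam n r m}

/-- `L_{m,r}`. -/
def Lset (n r m : ℕ) : Set (ℕ → ℕ) :=
  {f | f ∈ ORDn n ∧ im n f = im n (lam n r m) ∧
    ∀ x ∈ im n (lam n r m), preMin n f x = preMin n (lam n r m) x}

/-- `α_{m,r}`: the idempotent fixing `{1} ∪ [m, 2m-p-2]` and sending the rest of `[1,n]` to `1`. -/
def alphaMap (n r m : ℕ) : ℕ → ℕ := fun x =>
  if ¬(1 ≤ x ∧ x ≤ n) then x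
  else if x < m then 1
  else if x ≤ 2 * m - (m - r) - 2 then x
  else 1

/-- `β_{m,r}`: sends `[1,m-1]` to `1`, maps `m,…,2m-p-3` order-reversingly to `m,…,p+3`,
and `[2m-p-2, n]` to `p+2`. -/
def betaMap (n r m : ℕ) : ℕ → ℕ := fun x =>
  if ¬(1 ≤ x ∧ x ≤ n) then x
  else if x < m then 1
  else if x ≤ 2 * m - (m - r) - 3 then 2 * m - x
  else (m - r) + 2

/-- `S` is a subsemigroup of `T`. -/
def IsSubsemigroupOf (S T : Set (ℕ → ℕ)) : Prop :=
  S ⊆ T ∧ ∀ f ∈ S, ∀ g ∈ S, comp f g ∈ S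

/-- `S` is a maximal subsemigroup of `T`. -/
def IsMaximalSubsemigroupOf (S T : Set (ℕ → ℕ)) : Prop :=
  IsSubsemigroupOf S T ∧ S ≠ T ∧ ∀ U, IsSubsemigroupOf U T → S ⊆ U → U = S ∨ U = T



/-! ### Auxiliary development for `card_rdstar` -/

lemma aux_getD_lt {L : List ℕ} (hL : L.Pairwise (· < ·)) {a b : ℕ}
    (hab : a < b) (hb : b < L.length) : L.getD a 0 < L.getD b 0 := by
  have ha : a < L.length := lt_trans hab hb
  rw [List.getD_eq_getElem _ _ ha, List.getD_eq_getElem _ _ hb]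
  exact List.pairwise_iff_getElem.mp hL a b ha hb hab

lemma aux_getD_add {L : List ℕ} (hL : L.Pairwise (· < ·)) {a b : ℕ}
    (hab : a ≤ b) (hb : b < L.length) : L.getD a 0 + (b - a) ≤ L.getD b 0 := by
  obtain ⟨d, rfl⟩ : ∃ d, b = a + d := ⟨b - a, by omega⟩
  clear hab
  induction d with
  | zero => simp
  | succ d ih =>
    have h1 : a + d < L.length := by omega
    have h2 := ih h1
    have h3 : L.getD (a + d) 0 < L.getD (a + d + 1) 0 := aux_getD_lt hL (by omega) (by omega)
    show L.getD a 0 + (a + d + 1 - a) ≤ L.getD (a + d + 1) 0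
    omega

/-- number of "block starts" of a finite set of naturals -/
def Bk (S : Finset ℕ) : ℕ := (S.filter (fun x => x - 1 ∉ S)).card

def goodP (S : Finset ℕ) : Prop := 3 ≤ Bk S + (if 1 ∈ S then 0 else 1)

instance : DecidablePred goodP := fun S => by unfold goodP; infer_instance

def goodF (n : ℕ) : Finset (Finset ℕ) := (Finset.Icc 1 n).powerset.filter goodP

def dec (n : ℕ) (S : Finset ℕ) : ℕ → ℕ := fun x =>
  if ¬(1 ≤ x ∧ x ≤ n) then x
  else if n - x < S.card then (S.sort (· ≤ ·)).getD (n - x) 0 - (n - x) else 1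

lemma sort_len (S : Finset ℕ) : (S.sort (· ≤ ·)).length = S.card := Finset.length_sort _

lemma sort_mem_S {S : Finset ℕ} {m : ℕ} (hm : m < S.card) : (S.sort (· ≤ ·)).getD m 0 ∈ S := by
  have hm' : m < (S.sort (· ≤ ·)).length := by rw [sort_len]; exact hm
  rw [List.getD_eq_getElem _ _ hm']
  exact (Finset.mem_sort (α := ℕ) (· ≤ ·)).mp (List.getElem_mem hm')

lemma mem_Icc_of_subset {n : ℕ} {S : Finset ℕ} (hS : S ⊆ Finset.Icc 1 n) {y : ℕ} (hy : y ∈ S) :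
    1 ≤ y ∧ y ≤ n := by simpa [Finset.mem_Icc] using hS hy

lemma sort_lower {n : ℕ} {S : Finset ℕ} (hS : S ⊆ Finset.Icc 1 n) {m : ℕ} (hm : m < S.card) :
    m + 1 ≤ (S.sort (· ≤ ·)).getD m 0 := by
  have h1 := aux_getD_add ((Finset.sortedLT_sort S).pairwise) (Nat.zero_le m) (by rw [sort_len]; exact hm)
  have h2 : 1 ≤ (S.sort (· ≤ ·)).getD 0 0 :=
    (mem_Icc_of_subset hS (sort_mem_S (show 0 < S.card by omega))).1
  omega

lemma sort_upper {n : ℕ} {S : Finset ℕ} (hS : S ⊆ Finset.Icc 1 n) {m : ℕ} (hm : m < S.card) :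
    (S.sort (· ≤ ·)).getD m 0 ≤ n := (mem_Icc_of_subset hS (sort_mem_S hm)).2

lemma exists_index {S : Finset ℕ} {y : ℕ} (hy : y ∈ S) :
    ∃ m, m < S.card ∧ (S.sort (· ≤ ·)).getD m 0 = y := by
  obtain ⟨m, hm, hval⟩ := List.mem_iff_getElem.mp ((Finset.mem_sort (α := ℕ) (· ≤ ·)).mpr hy)
  exact ⟨m, by rw [← sort_len S]; exact hm, by rw [List.getD_eq_getElem _ _ hm]; exact hval⟩

lemma Bk_le_card (S : Finset ℕ) : Bk S ≤ S.card := Finset.card_le_card (Finset.filter_subset _ _)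

lemma goodP_two_le {S : Finset ℕ} (hg : goodP S) : 2 ≤ Bk S := by
  unfold goodP at hg; split_ifs at hg <;> omega

lemma good_gap {n : ℕ} {S : Finset ℕ} (hS : S ⊆ Finset.Icc 1 n) (h2 : 2 ≤ Bk S) :
    ∃ m, 1 ≤ m ∧ m < S.card ∧
      (S.sort (· ≤ ·)).getD (m - 1) 0 + 2 ≤ (S.sort (· ≤ ·)).getD m 0 := by
  have h1' : 1 < (S.filter (fun x => x - 1 ∉ S)).card := by unfold Bk at h2; omega
  obtain ⟨y, hy, hyne⟩ := Finset.exists_mem_ne h1' ((S.sort (· ≤ ·)).getD 0 0)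
  rw [Finset.mem_filter] at hy
  obtain ⟨m, hm, hval⟩ := exists_index hy.1
  have hm0 : m ≠ 0 := by rintro rfl; exact hyne hval.symm
  refine ⟨m, by omega, hm, ?_⟩
  have h1 : (S.sort (· ≤ ·)).getD (m - 1) 0 < (S.sort (· ≤ ·)).getD m 0 :=
    aux_getD_lt ((Finset.sortedLT_sort S).pairwise) (by omega) (by rw [sort_len]; exact hm)
  have h2' : (S.sort (· ≤ ·)).getD (m - 1) 0 ∈ S := sort_mem_S (by omega)
  have h3 : (S.sort (· ≤ ·)).getD m 0 - 1 ∉ S := by rw [hval]; exact hy.2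
  have h4 : (S.sort (· ≤ ·)).getD (m - 1) 0 ≠ (S.sort (· ≤ ·)).getD m 0 - 1 :=
    fun h => h3 (h ▸ h2')
  omega

lemma good_max {n : ℕ} {S : Finset ℕ} (hS : S ⊆ Finset.Icc 1 n) (h2 : 2 ≤ Bk S) :
    S.card + 1 ≤ (S.sort (· ≤ ·)).getD (S.card - 1) 0 := by
  obtain ⟨m, hm1, hm2, hgap⟩ := good_gap hS h2
  have h1 := aux_getD_add ((Finset.sortedLT_sort S).pairwise) (show m ≤ S.card - 1 by omega)
    (by rw [sort_len]; omega)
  have h2' := sort_lower hS (show m - 1 < S.card by omega)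
  omega

lemma good_card_lt {n : ℕ} {S : Finset ℕ} (hS : S ⊆ Finset.Icc 1 n) (hg : goodP S) :
    2 ≤ S.card ∧ S.card < n := by
  have h2 := goodP_two_le hg
  have hIcc : (Finset.Icc 1 n).card = n := by rw [Nat.card_Icc]; omega
  have hcle : S.card ≤ n := by have := Finset.card_le_card hS; omega
  have h4 := Bk_le_card S
  refine ⟨by omega, ?_⟩
  rcases lt_or_eq_of_le hcle with h | h
  · exact h
  · exfalso
    have hmax := good_max hS h2
    have := sort_upper hS (show S.card - 1 < S.card by omega)
    omega

lemma dec_out {n : ℕ} {S : Finset ℕ} {x : ℕ} (h : ¬(1 ≤ x ∧ x ≤ n)) : dec n S x = x := by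
  unfold dec; rw [if_pos h]

lemma dec_low {n : ℕ} {S : Finset ℕ} {x : ℕ} (h1 : 1 ≤ x) (h2 : x ≤ n - S.card)
    (h3 : S.card ≤ n) : dec n S x = 1 := by
  unfold dec; rw [if_neg (by omega), if_neg (by omega)]

lemma dec_tail {n : ℕ} {S : Finset ℕ} {x : ℕ} (h1 : n - S.card < x) (h2 : x ≤ n) :
    dec n S x = (S.sort (· ≤ ·)).getD (n - x) 0 - (n - x) := by
  unfold dec; rw [if_neg (by omega), if_pos (by omega)]

lemma dec_trans_decr {n : ℕ} {S : Finset ℕ} (hS : S ⊆ Finset.Icc 1 n) (hg : goodP S) :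
    IsTrans n (dec n S) ∧ Decreasing n (dec n S) := by
  obtain ⟨hc2, hcn⟩ := good_card_lt hS hg
  refine ⟨⟨?_, fun x hx => dec_out hx⟩, ?_⟩
  · intro x hx1 hx2
    by_cases hx : x ≤ n - S.card
    · rw [dec_low hx1 hx (by omega)]; omega
    · rw [dec_tail (by omega) hx2]
      have hidx : n - x < S.card := by omega
      have hl := sort_lower hS hidx
      have hu := sort_upper hS hidx
      omega
  · intro x hx1 hx2
    by_cases hx : x ≤ n - S.card
    · rw [dec_low hx1 hx (by omega)]; omega
    · rw [dec_tail (by omega) hx2]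
      have hu := sort_upper hS (show n - x < S.card by omega)
      omega

lemma dec_anti {n : ℕ} {S : Finset ℕ} (hS : S ⊆ Finset.Icc 1 n) (hg : goodP S) :
    AntiCyclic n (dec n S) := by
  obtain ⟨hc2, hcn⟩ := good_card_lt hS hg
  have hkn : S.card ≤ n := le_of_lt hcn
  have hfil : (Finset.Icc 1 n).filter (fun i => dec n S i < nxt n (dec n S) i)
      = {n - S.card} := by
    ext i
    simp only [Finset.mem_filter, Finset.mem_Icc, Finset.mem_singleton]
    constructor
    · rintro ⟨⟨hi1, hi2⟩, hlt⟩
      by_contra hne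
      by_cases hin : i = n
      · rw [hin, nxt, if_pos rfl, dec_low le_rfl (by omega) hkn] at hlt
        rw [dec_tail (show n - S.card < n by omega) le_rfl] at hlt
        have hl := sort_lower hS (show n - n < S.card by omega)
        omega
      · rw [nxt, if_neg hin] at hlt
        rcases lt_or_gt_of_ne hne with hlt' | hgt'
        · rw [dec_low hi1 (by omega) hkn, dec_low (by omega) (by omega) hkn] at hlt; omega
        · have hi2' : i + 1 ≤ n := by omega
          rw [dec_tail (by omega) hi2, dec_tail (by omega) hi2'] at hlt
          have hlt2 : (S.sort (· ≤ ·)).getD (n - (i+1)) 0 < (S.sort (· ≤ ·)).getD (n - i) 0 :=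
            aux_getD_lt ((Finset.sortedLT_sort S).pairwise) (by omega) (by rw [sort_len]; omega)
          have hlo := sort_lower hS (show n - (i+1) < S.card by omega)
          omega
    · rintro rfl
      have hj1 : 1 ≤ n - S.card := by omega
      refine ⟨⟨hj1, by omega⟩, ?_⟩
      rw [nxt, if_neg (by omega)]
      rw [dec_low hj1 le_rfl hkn, dec_tail (by omega) (by omega)]
      have hidx : n - (n - S.card + 1) = S.card - 1 := by omega
      rw [hidx]
      have := good_max hS (goodP_two_le hg)
      omega
  rw [AntiCyclic, hfil, Finset.card_singleton]

lemma blockstart_descent {n : ℕ} {S : Finset ℕ} (hS : S ⊆ Finset.Icc 1 n) (hg : goodP S)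
    {y : ℕ} (hyS : y ∈ S) (hy1 : y - 1 ∉ S) (hymin : y ≠ (S.sort (· ≤ ·)).getD 0 0) :
    ∃ x, n - S.card < x ∧ x < n ∧ nxt n (dec n S) x < dec n S x ∧ dec n S x + (n - x) = y := by
  obtain ⟨hc2, hcn⟩ := good_card_lt hS hg
  obtain ⟨m, hm, hval⟩ := exists_index hyS
  have hm0 : m ≠ 0 := by
    rintro rfl; exact hymin hval.symm
  have hylow := sort_lower hS hm
  rw [hval] at hylow
  refine ⟨n - m, by omega, by omega, ?_, ?_⟩
  · rw [nxt, if_neg (by omega)]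
    rw [dec_tail (show n - S.card < n - m by omega) (by omega),
      dec_tail (by omega) (by omega)]
    have e1 : n - (n - m) = m := by omega
    have e2 : n - (n - m + 1) = m - 1 := by omega
    rw [e1, e2, hval]
    have h1 : (S.sort (· ≤ ·)).getD (m - 1) 0 < (S.sort (· ≤ ·)).getD m 0 :=
      aux_getD_lt ((Finset.sortedLT_sort S).pairwise) (by omega) (by rw [sort_len]; exact hm)
    rw [hval] at h1
    have h2 : (S.sort (· ≤ ·)).getD (m - 1) 0 ∈ S := sort_mem_S (by omega)
    have h4 : (S.sort (· ≤ ·)).getD (m - 1) 0 ≠ y - 1 := fun h => hy1 (h ▸ h2)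
    have h5 := sort_lower hS (show m - 1 < S.card by omega)
    omega
  · rw [dec_tail (by omega) (by omega)]
    have e1 : n - (n - m) = m := by omega
    rw [e1, hval]
    omega

lemma dec_not_cyclic {n : ℕ} {S : Finset ℕ} (hS : S ⊆ Finset.Icc 1 n) (hg : goodP S) :
    ¬ Cyclic n (dec n S) := by
  obtain ⟨hc2, hcn⟩ := good_card_lt hS hg
  rw [Cyclic, not_le]
  rw [Finset.one_lt_card]
  by_cases h1S : 1 ∈ S
  · have hB3 : 3 ≤ Bk S := by
      unfold goodP at hg; rw [if_pos h1S] at hg; omega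
    have hcard : 1 < ((S.filter (fun x => x - 1 ∉ S)).erase ((S.sort (· ≤ ·)).getD 0 0)).card := by
      have := Finset.pred_card_le_card_erase
        (s := S.filter (fun x => x - 1 ∉ S)) (a := (S.sort (· ≤ ·)).getD 0 0)
      unfold Bk at hB3; omega
    obtain ⟨y1, hy1, y2, hy2, hne⟩ := Finset.one_lt_card.mp hcard
    rw [Finset.mem_erase, Finset.mem_filter] at hy1 hy2
    obtain ⟨x1, hx1a, hx1b, hx1c, hx1d⟩ := blockstart_descent hS hg hy1.2.1 hy1.2.2 hy1.1
    obtain ⟨x2, hx2a, hx2b, hx2c, hx2d⟩ := blockstart_descent hS hg hy2.2.1 hy2.2.2 hy2.1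
    refine ⟨x1, ?_, x2, ?_, ?_⟩
    · rw [Finset.mem_filter, Finset.mem_Icc]; exact ⟨⟨by omega, by omega⟩, hx1c⟩
    · rw [Finset.mem_filter, Finset.mem_Icc]; exact ⟨⟨by omega, by omega⟩, hx2c⟩
    · intro h; apply hne; rw [← hx1d, ← hx2d, h]
  · have hB2 : 2 ≤ Bk S := goodP_two_le hg
    have hcard : 0 < ((S.filter (fun x => x - 1 ∉ S)).erase ((S.sort (· ≤ ·)).getD 0 0)).card := by
      have := Finset.pred_card_le_card_erase
        (s := S.filter (fun x => x - 1 ∉ S)) (a := (S.sort (· ≤ ·)).getD 0 0)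
      unfold Bk at hB2; omega
    obtain ⟨y1, hy1⟩ := Finset.card_pos.mp hcard
    rw [Finset.mem_erase, Finset.mem_filter] at hy1
    obtain ⟨x1, hx1a, hx1b, hx1c, hx1d⟩ := blockstart_descent hS hg hy1.2.1 hy1.2.2 hy1.1
    have hdn : nxt n (dec n S) n < dec n S n := by
      rw [nxt, if_pos rfl, dec_low le_rfl (by omega) (by omega)]
      rw [dec_tail (by omega) le_rfl]
      have h0 : (S.sort (· ≤ ·)).getD 0 0 ∈ S := sort_mem_S (by omega)
      have hne1 : (S.sort (· ≤ ·)).getD 0 0 ≠ 1 := fun h => h1S (h ▸ h0)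
      have hlo := sort_lower hS (show 0 < S.card by omega)
      have e : n - n = 0 := by omega
      rw [e]
      omega
    refine ⟨x1, ?_, n, ?_, by omega⟩
    · rw [Finset.mem_filter, Finset.mem_Icc]; exact ⟨⟨by omega, by omega⟩, hx1c⟩
    · rw [Finset.mem_filter, Finset.mem_Icc]; exact ⟨⟨by omega, le_rfl⟩, hdn⟩

lemma dec_mem_RDstar {n : ℕ} {S : Finset ℕ} (hSg : S ∈ goodF n) : dec n S ∈ RDstar n := by
  rw [goodF, Finset.mem_filter, Finset.mem_powerset] at hSg
  obtain ⟨hS, hg⟩ := hSg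
  obtain ⟨ht, hd⟩ := dec_trans_decr hS hg
  exact ⟨⟨ht, hd⟩, dec_anti hS hg, dec_not_cyclic hS hg⟩

lemma dec_ne_of_card_lt {n : ℕ} {S T : Finset ℕ} (hT : T ⊆ Finset.Icc 1 n) (hgT : goodP T)
    (hST : S.card < T.card) (hTn : T.card < n) : dec n S ≠ dec n T := by
  intro h
  have h1 : dec n S (n - T.card + 1) = 1 := dec_low (by omega) (by omega) (by omega)
  have h2 : dec n T (n - T.card + 1)
      = (T.sort (· ≤ ·)).getD (T.card - 1) 0 - (T.card - 1) := by
    rw [dec_tail (by omega) (by omega)]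
    have e : n - (n - T.card + 1) = T.card - 1 := by omega
    rw [e]
  have h3 := good_max hT (goodP_two_le hgT)
  rw [h, h2] at h1
  have := Bk_le_card T
  have h4 := goodP_two_le hgT
  omega

lemma dec_injOn {n : ℕ} : ∀ S ∈ goodF n, ∀ T ∈ goodF n, dec n S = dec n T → S = T := by
  intro S hS' T hT' h
  rw [goodF, Finset.mem_filter, Finset.mem_powerset] at hS' hT'
  obtain ⟨hS, hgS⟩ := hS'
  obtain ⟨hT, hgT⟩ := hT'
  obtain ⟨hc2S, hcnS⟩ := good_card_lt hS hgS
  obtain ⟨hc2T, hcnT⟩ := good_card_lt hT hgT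
  have hcard : S.card = T.card := by
    rcases lt_trichotomy S.card T.card with hlt | he | hgt
    · exact absurd h (dec_ne_of_card_lt hT hgT hlt hcnT)
    · exact he
    · exact absurd h.symm (dec_ne_of_card_lt hS hgS hgt hcnS)
  have hL : S.sort (· ≤ ·) = T.sort (· ≤ ·) := by
    apply List.ext_getElem (by rw [sort_len, sort_len, hcard])
    intro m hm1 hm2
    rw [sort_len] at hm1 hm2
    have hx := congrFun h (n - m)
    rw [dec_tail (by omega) (by omega), dec_tail (by omega) (by omega)] at hx
    have e : n - (n - m) = m := by omega
    rw [e] at hx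
    have l1 := sort_lower hS hm1
    have l2 := sort_lower hT hm2
    have heq : (S.sort (· ≤ ·)).getD m 0 = (T.sort (· ≤ ·)).getD m 0 := by omega
    rw [List.getD_eq_getElem _ _ (by rw [sort_len]; exact hm1),
      List.getD_eq_getElem _ _ (by rw [sort_len]; exact hm2)] at heq
    exact heq
  calc S = (S.sort (· ≤ ·)).toFinset := (Finset.sort_toFinset _ _).symm
    _ = (T.sort (· ≤ ·)).toFinset := by rw [hL]
    _ = T := Finset.sort_toFinset _ _

lemma dec_surj {n : ℕ} (hn : 4 ≤ n) {f : ℕ → ℕ} (hf : f ∈ RDstar n) :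
    ∃ S ∈ goodF n, dec n S = f := by
  obtain ⟨⟨htr, hdecr⟩, hanti, hncyc⟩ := hf
  have hf1 : f 1 = 1 := le_antisymm (hdecr 1 le_rfl (by omega)) (htr.1 1 le_rfl (by omega)).1
  have hfge : ∀ x, 1 ≤ x → x ≤ n → 1 ≤ f x := fun x h1 h2 => (htr.1 x h1 h2).1
  have hex : {x | 1 ≤ x ∧ x ≤ n ∧ 2 ≤ f x}.Nonempty := by
    by_contra hall
    rw [Set.not_nonempty_iff_eq_empty] at hall
    have hall' : ∀ x, 1 ≤ x → x ≤ n → f x = 1 := by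
      intro x h1 h2
      have hx : x ∉ {x | 1 ≤ x ∧ x ≤ n ∧ 2 ≤ f x} := by rw [hall]; exact Set.notMem_empty x
      have h3 : ¬ (2 ≤ f x) := fun h => hx ⟨h1, h2, h⟩
      have := hfge x h1 h2
      omega
    apply hncyc
    rw [Cyclic]
    have he : (Finset.Icc 1 n).filter (fun i => nxt n f i < f i) = ∅ := by
      rw [Finset.filter_eq_empty_iff]
      intro i hi
      rw [Finset.mem_Icc] at hi
      rw [hall' i hi.1 hi.2, nxt]
      split_ifs with h
      · rw [hf1]; omega
      · have := hfge (i+1) (by omega) (by omega)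
        omega
    rw [he]
    simp
  obtain ⟨hw1, hw2, hw3⟩ := Nat.sInf_mem hex
  set w := sInf {x | 1 ≤ x ∧ x ≤ n ∧ 2 ≤ f x} with hw
  have hwlow : ∀ x, 1 ≤ x → x < w → f x = 1 := by
    intro x h1 h2
    have hx := Nat.notMem_of_lt_sInf (show x < sInf {x | 1 ≤ x ∧ x ≤ n ∧ 2 ≤ f x} from h2)
    simp only [Set.mem_setOf_eq] at hx
    have := hfge x h1 (by omega)
    omega
  have hw2' : 2 ≤ w := by
    rcases Nat.lt_or_ge w 2 with h | h
    · have hweq : w = 1 := by omega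
      rw [hweq, hf1] at hw3; omega
    · exact h
  have hjmem : w - 1 ∈ (Finset.Icc 1 n).filter (fun i => f i < nxt n f i) := by
    rw [Finset.mem_filter, Finset.mem_Icc]
    refine ⟨⟨by omega, by omega⟩, ?_⟩
    rw [nxt, if_neg (by omega)]
    have e : w - 1 + 1 = w := by omega
    rw [e, hwlow (w-1) (by omega) (by omega)]
    omega
  have hasc : (Finset.Icc 1 n).filter (fun i => f i < nxt n f i) = {w - 1} := by
    refine (Finset.eq_of_subset_of_card_le (Finset.singleton_subset_iff.mpr hjmem) ?_).symm
    rw [Finset.card_singleton]; exact hanti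
  have hmono : ∀ x, w ≤ x → x < n → f (x + 1) ≤ f x := by
    intro x hx1 hx2
    by_contra hlt
    have hxf : x ∈ (Finset.Icc 1 n).filter (fun i => f i < nxt n f i) := by
      rw [Finset.mem_filter, Finset.mem_Icc]
      exact ⟨⟨by omega, by omega⟩, by rw [nxt, if_neg (by omega)]; omega⟩
    rw [hasc, Finset.mem_singleton] at hxf
    omega
  have hmono' : ∀ x y, w ≤ x → x ≤ y → y ≤ n → f y ≤ f x := by
    intro x y hx hxy
    induction y, hxy using Nat.le_induction with
    | base => intro _; exact le_rfl
    | succ y hy ih =>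
      intro hyn
      exact le_trans (hmono y (by omega) (by omega)) (ih (by omega))
  have hgstrict : ∀ x y, w ≤ x → x < y → y ≤ n → f y + (n - y) < f x + (n - x) := by
    intro x y hx hxy hy
    have := hmono' x y hx (le_of_lt hxy) hy
    omega
  set S := (Finset.Icc w n).image (fun x => f x + (n - x)) with hSdef
  have hSsub : S ⊆ Finset.Icc 1 n := by
    intro y hy
    rw [hSdef, Finset.mem_image] at hy
    obtain ⟨x, hx, rfl⟩ := hy
    rw [Finset.mem_Icc] at hx
    have h1 := hfge x (by omega) hx.2
    have h2 := hdecr x (by omega) hx.2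
    rw [Finset.mem_Icc]
    omega
  have hinj : Set.InjOn (fun x => f x + (n - x)) (Finset.Icc w n) := by
    intro a ha b hb hab
    simp only [Finset.coe_Icc, Set.mem_Icc] at ha hb
    simp only at hab
    rcases lt_trichotomy a b with h | h | h
    · have := hgstrict a b ha.1 h hb.2; omega
    · exact h
    · have := hgstrict b a hb.1 h ha.2; omega
  have hScard : S.card = n + 1 - w := by
    rw [hSdef, Finset.card_image_of_injOn hinj, Nat.card_Icc]
  have hMlen : ((List.range (n + 1 - w)).map (fun m => f (n - m) + m)).length = n + 1 - w := by
    simp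
  have hMget : ∀ m, m < n + 1 - w →
      ((List.range (n + 1 - w)).map (fun m => f (n - m) + m)).getD m 0 = f (n - m) + m := by
    intro m hm
    rw [List.getD_eq_getElem _ _ (by simpa using hm)]
    simp
  have hMsorted : ((List.range (n + 1 - w)).map (fun m => f (n - m) + m)).Pairwise (· < ·) := by
    rw [List.pairwise_iff_getElem]
    intro i j hi hj hij
    simp only [List.length_map, List.length_range] at hi hj
    simp only [List.getElem_map, List.getElem_range]
    have hkey := hgstrict (n - j) (n - i) (by omega) (by omega) (by omega)
    have e1 : n - (n - i) = i := by omega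
    have e2 : n - (n - j) = j := by omega
    rw [e1, e2] at hkey
    omega
  have hMS : ((List.range (n + 1 - w)).map (fun m => f (n - m) + m)).toFinset = S := by
    ext y
    rw [List.mem_toFinset, List.mem_map]
    simp only [List.mem_range]
    rw [hSdef, Finset.mem_image]
    constructor
    · rintro ⟨m, hm, rfl⟩
      refine ⟨n - m, by rw [Finset.mem_Icc]; omega, ?_⟩
      have e : n - (n - m) = m := by omega
      rw [e]
    · rintro ⟨x, hx, rfl⟩
      rw [Finset.mem_Icc] at hx
      refine ⟨n - x, by omega, ?_⟩
      have e : n - (n - x) = x := by omega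
      rw [e]
  have hLM : S.sort (· ≤ ·) = (List.range (n + 1 - w)).map (fun m => f (n - m) + m) := by
    apply List.Perm.eq_of_pairwise' (Finset.pairwise_sort _ _) (hMsorted.imp le_of_lt)
      (List.perm_of_nodup_nodup_toFinset_eq (Finset.sort_nodup _ _) hMsorted.nodup
        (by rw [Finset.sort_toFinset, hMS]))
  have hwn : n - S.card = w - 1 := by rw [hScard]; omega
  have hdecf : dec n S = f := by
    funext x
    by_cases hx : 1 ≤ x ∧ x ≤ n
    · by_cases hxw : x < w
      · rw [dec_low hx.1 (by omega) (by omega), hwlow x hx.1 hxw]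
      · push_neg at hxw
        rw [dec_tail (by omega) hx.2, hLM, hMget (n - x) (by omega)]
        have e : n - (n - x) = x := by omega
        rw [e]
        omega
    · rw [dec_out hx, htr.2 x hx]
  have hminS : f n ∈ S := by
    rw [hSdef, Finset.mem_image]
    exact ⟨n, by rw [Finset.mem_Icc]; omega, by rw [Nat.sub_self, Nat.add_zero]⟩
  have hminle : ∀ y ∈ S, f n ≤ y := by
    intro y hy
    rw [hSdef, Finset.mem_image] at hy
    obtain ⟨x, hx, rfl⟩ := hy
    rw [Finset.mem_Icc] at hx
    have := hmono' x n hx.1 hx.2 le_rfl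
    omega
  have hminBk : f n ∈ S.filter (fun x => x - 1 ∉ S) := by
    rw [Finset.mem_filter]
    refine ⟨hminS, fun hmem => ?_⟩
    have h1 := hminle _ hmem
    have h2 := hfge n (by omega) le_rfl
    omega
  have hbs : ∀ x, w ≤ x → x < n → f (x+1) < f x →
      (f x + (n - x)) ∈ S.filter (fun z => z - 1 ∉ S) ∧ f x + (n - x) ≠ f n := by
    intro x hx1 hx2 hfx
    have hxS : f x + (n - x) ∈ S := by
      rw [hSdef, Finset.mem_image]
      exact ⟨x, by rw [Finset.mem_Icc]; omega, rfl⟩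
    refine ⟨?_, ?_⟩
    · rw [Finset.mem_filter]
      refine ⟨hxS, fun hmem => ?_⟩
      rw [hSdef, Finset.mem_image] at hmem
      obtain ⟨x', hx', hval⟩ := hmem
      rw [Finset.mem_Icc] at hx'
      rcases le_or_gt x' x with h | h
      · have := hmono' x' x hx'.1 h (by omega)
        omega
      · have := hmono' (x+1) x' (by omega) h hx'.2
        omega
    · have h2 := hfge n (by omega) le_rfl
      have := hmono' x n hx1 (by omega) le_rfl
      omega
  have h2d : 1 < ((Finset.Icc 1 n).filter (fun i => nxt n f i < f i)).card := by
    rw [Cyclic, not_le] at hncyc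
    exact hncyc
  obtain ⟨i1, hi1, i2, hi2, hi12⟩ := Finset.one_lt_card.mp h2d
  have hdesc : ∀ i ∈ (Finset.Icc 1 n).filter (fun i => nxt n f i < f i), w ≤ i := by
    intro i hi
    rw [Finset.mem_filter, Finset.mem_Icc] at hi
    by_contra hlt
    push_neg at hlt
    have hfi : f i = 1 := hwlow i hi.1.1 hlt
    have hnge : 1 ≤ nxt n f i := by
      rw [nxt]
      split_ifs with h
      · rw [hf1]
      · exact hfge (i+1) (by omega) (by omega)
    omega
  have hkey : ∀ i ∈ (Finset.Icc 1 n).filter (fun i => nxt n f i < f i), i ≠ n →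
      (f i + (n - i)) ∈ S.filter (fun z => z - 1 ∉ S) ∧ f i + (n - i) ≠ f n := by
    intro i hi hin
    have hwi := hdesc i hi
    rw [Finset.mem_filter, Finset.mem_Icc] at hi
    have hd := hi.2
    rw [nxt, if_neg hin] at hd
    exact hbs i hwi (by omega) hd
  have hibounds : ∀ i ∈ (Finset.Icc 1 n).filter (fun i => nxt n f i < f i), 1 ≤ i ∧ i ≤ n := by
    intro i hi
    rw [Finset.mem_filter, Finset.mem_Icc] at hi
    exact hi.1
  refine ⟨S, ?_, hdecf⟩
  rw [goodF, Finset.mem_filter, Finset.mem_powerset]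
  refine ⟨hSsub, ?_⟩
  unfold goodP
  by_cases hcase : i1 = n ∨ i2 = n
  · obtain ⟨io, hio, hion⟩ : ∃ io, io ∈ (Finset.Icc 1 n).filter (fun i => nxt n f i < f i)
        ∧ io ≠ n := by
      rcases hcase with h | h
      · exact ⟨i2, hi2, by omega⟩
      · exact ⟨i1, hi1, by omega⟩
    have hfn2 : 2 ≤ f n := by
      have hdn : nxt n f n < f n := by
        rcases hcase with h | h
        · have := (Finset.mem_filter.mp hi1).2; rwa [h] at this
        · have := (Finset.mem_filter.mp hi2).2; rwa [h] at this
      rw [nxt, if_pos rfl, hf1] at hdn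
      omega
    have h1S : 1 ∉ S := fun h => by have := hminle 1 h; omega
    obtain ⟨hyf, hyne⟩ := hkey io hio hion
    have hsub2 : ({f n, f io + (n - io)} : Finset ℕ) ⊆ S.filter (fun x => x - 1 ∉ S) := by
      intro z hz
      rw [Finset.mem_insert, Finset.mem_singleton] at hz
      rcases hz with rfl | rfl
      · exact hminBk
      · exact hyf
    have hc := Finset.card_le_card hsub2
    rw [Finset.card_pair (Ne.symm hyne)] at hc
    rw [if_neg h1S]
    unfold Bk
    omega
  · push_neg at hcase
    obtain ⟨hk1, hk2⟩ := hcase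
    obtain ⟨hy1f, hy1ne⟩ := hkey i1 hi1 hk1
    obtain ⟨hy2f, hy2ne⟩ := hkey i2 hi2 hk2
    have hb1 := hibounds i1 hi1
    have hb2 := hibounds i2 hi2
    have hw1' := hdesc i1 hi1
    have hw2'' := hdesc i2 hi2
    have hy12 : f i1 + (n - i1) ≠ f i2 + (n - i2) := by
      intro he
      rcases lt_or_gt_of_ne hi12 with h | h
      · have := hgstrict i1 i2 hw1' h (by omega); omega
      · have := hgstrict i2 i1 hw2'' h (by omega); omega
    have hsub3 : ({f n, f i1 + (n - i1), f i2 + (n - i2)} : Finset ℕ)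
        ⊆ S.filter (fun x => x - 1 ∉ S) := by
      intro z hz
      rw [Finset.mem_insert, Finset.mem_insert, Finset.mem_singleton] at hz
      rcases hz with rfl | rfl | rfl
      · exact hminBk
      · exact hy1f
      · exact hy2f
    have hc := Finset.card_le_card hsub3
    have hc3 : ({f n, f i1 + (n - i1), f i2 + (n - i2)} : Finset ℕ).card = 3 := by
      rw [Finset.card_insert_of_notMem (by
        simp only [Finset.mem_insert, Finset.mem_singleton]
        push_neg
        exact ⟨Ne.symm hy1ne, Ne.symm hy2ne⟩), Finset.card_pair hy12]
    rw [hc3] at hc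
    unfold Bk
    split_ifs <;> omega

lemma rdstar_eq {n : ℕ} (hn : 4 ≤ n) : RDstar n = dec n '' ↑(goodF n) := by
  ext f
  constructor
  · intro hf
    obtain ⟨S, hS, hdec⟩ := dec_surj hn hf
    exact ⟨S, by exact_mod_cast hS, hdec⟩
  · rintro ⟨S, hS, rfl⟩
    exact dec_mem_RDstar (by exact_mod_cast hS)

/-! ### Counting the bad sets -/

lemma Bk_empty : Bk ∅ = 0 := by simp [Bk]

lemma Bk_Icc {a b : ℕ} (ha : 1 ≤ a) (hab : a ≤ b) : Bk (Finset.Icc a b) = 1 := by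
  have h : (Finset.Icc a b).filter (fun x => x - 1 ∉ Finset.Icc a b) = {a} := by
    ext x
    simp only [Finset.mem_filter, Finset.mem_Icc, Finset.mem_singleton]
    omega
  rw [Bk, h, Finset.card_singleton]

lemma Bk_two {t c d : ℕ} (ht : 1 ≤ t) (htc : t + 2 ≤ c) (hcd : c ≤ d) :
    Bk (Finset.Icc 1 t ∪ Finset.Icc c d) = 2 := by
  have h : (Finset.Icc 1 t ∪ Finset.Icc c d).filter
      (fun x => x - 1 ∉ Finset.Icc 1 t ∪ Finset.Icc c d) = {1, c} := by
    ext x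
    simp only [Finset.mem_filter, Finset.mem_union, Finset.mem_Icc, Finset.mem_insert,
      Finset.mem_singleton]
    omega
  rw [Bk, h, Finset.card_pair (by omega)]

def I3 (n : ℕ) : Finset (ℕ × ℕ) :=
  (Finset.Icc 1 n ×ˢ Finset.Icc 1 n).filter fun p => p.1 < p.2

def I4 (n : ℕ) : Finset (ℕ × ℕ × ℕ) :=
  (Finset.Icc 1 n ×ˢ Finset.Icc 1 n ×ˢ Finset.Icc 1 n).filter
    fun p => p.1 < p.2.1 ∧ p.2.1 < p.2.2

lemma card_I3 (n : ℕ) : (I3 n).card = n.choose 2 := by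
  have h := Finset.card_powersetCard 2 (Finset.Icc 1 n)
  rw [Nat.card_Icc, Nat.add_sub_cancel] at h
  rw [← h]
  apply Finset.card_bij (fun p _ => ({p.1, p.2} : Finset ℕ))
  · intro p hp
    simp only [I3, Finset.mem_filter, Finset.mem_product] at hp
    rw [Finset.mem_powersetCard]
    constructor
    · intro z hz
      rw [Finset.mem_insert, Finset.mem_singleton] at hz
      rcases hz with rfl | rfl
      · exact hp.1.1
      · exact hp.1.2
    · exact Finset.card_pair (ne_of_lt hp.2)
  · intro p hp q hq he
    simp only [I3, Finset.mem_filter, Finset.mem_product] at hp hq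
    have h1 : p.1 ∈ ({q.1, q.2} : Finset ℕ) := by rw [← he]; simp
    have h2 : p.2 ∈ ({q.1, q.2} : Finset ℕ) := by rw [← he]; simp
    have h3 : q.1 ∈ ({p.1, p.2} : Finset ℕ) := by rw [he]; simp
    simp only [Finset.mem_insert, Finset.mem_singleton] at h1 h2 h3
    have hpq : p.1 = q.1 ∧ p.2 = q.2 := by
      have := hp.2
      have := hq.2
      omega
    exact Prod.ext hpq.1 hpq.2
  · intro T hT
    rw [Finset.mem_powersetCard] at hT
    obtain ⟨x, y, hxy, rfl⟩ := Finset.card_eq_two.mp hT.2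
    have hx := hT.1 (by simp : x ∈ ({x,y} : Finset ℕ))
    have hy := hT.1 (by simp : y ∈ ({x,y} : Finset ℕ))
    rcases lt_or_gt_of_ne hxy with h | h
    · refine ⟨(x, y), ?_, rfl⟩
      simp only [I3, Finset.mem_filter, Finset.mem_product]
      exact ⟨⟨hx, hy⟩, h⟩
    · refine ⟨(y, x), ?_, ?_⟩
      · simp only [I3, Finset.mem_filter, Finset.mem_product]
        exact ⟨⟨hy, hx⟩, h⟩
      · rw [Finset.pair_comm]

lemma card_I4 (n : ℕ) : (I4 n).card = n.choose 3 := by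
  have h := Finset.card_powersetCard 3 (Finset.Icc 1 n)
  rw [Nat.card_Icc, Nat.add_sub_cancel] at h
  rw [← h]
  apply Finset.card_bij (fun p _ => ({p.1, p.2.1, p.2.2} : Finset ℕ))
  · intro p hp
    simp only [I4, Finset.mem_filter, Finset.mem_product] at hp
    rw [Finset.mem_powersetCard]
    constructor
    · intro z hz
      rw [Finset.mem_insert, Finset.mem_insert, Finset.mem_singleton] at hz
      rcases hz with rfl | rfl | rfl
      · exact hp.1.1
      · exact hp.1.2.1
      · exact hp.1.2.2
    · rw [Finset.card_insert_of_notMem (by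
        simp only [Finset.mem_insert, Finset.mem_singleton]
        have := hp.2
        omega), Finset.card_pair (by have := hp.2; omega)]
  · intro p hp q hq he
    simp only [I4, Finset.mem_filter, Finset.mem_product] at hp hq
    have h1 : p.1 ∈ ({q.1, q.2.1, q.2.2} : Finset ℕ) := by rw [← he]; simp
    have h2 : p.2.1 ∈ ({q.1, q.2.1, q.2.2} : Finset ℕ) := by rw [← he]; simp
    have h3 : p.2.2 ∈ ({q.1, q.2.1, q.2.2} : Finset ℕ) := by rw [← he]; simp
    have h4 : q.1 ∈ ({p.1, p.2.1, p.2.2} : Finset ℕ) := by rw [he]; simp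
    have h5 : q.2.1 ∈ ({p.1, p.2.1, p.2.2} : Finset ℕ) := by rw [he]; simp
    have h6 : q.2.2 ∈ ({p.1, p.2.1, p.2.2} : Finset ℕ) := by rw [he]; simp
    simp only [Finset.mem_insert, Finset.mem_singleton] at h1 h2 h3 h4 h5 h6
    have hpq : p.1 = q.1 ∧ p.2.1 = q.2.1 ∧ p.2.2 = q.2.2 := by
      have := hp.2
      have := hq.2
      omega
    exact Prod.ext hpq.1 (Prod.ext hpq.2.1 hpq.2.2)
  · intro T hT
    rw [Finset.mem_powersetCard] at hT
    obtain ⟨a, b, c, hab, hac, hbc, rfl⟩ := Finset.card_eq_three.mp hT.2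
    have ha := hT.1 (by simp : a ∈ ({a,b,c} : Finset ℕ))
    have hb := hT.1 (by simp : b ∈ ({a,b,c} : Finset ℕ))
    have hc := hT.1 (by simp : c ∈ ({a,b,c} : Finset ℕ))
    have e1 : ∀ x y z : ℕ, ({x, y, z} : Finset ℕ) = {x, z, y} := by
      intro x y z; ext u; simp only [Finset.mem_insert, Finset.mem_singleton]; tauto
    have e2 : ∀ x y z : ℕ, ({x, y, z} : Finset ℕ) = {y, x, z} := by
      intro x y z; ext u; simp only [Finset.mem_insert, Finset.mem_singleton]; tauto
    obtain ⟨x, y, z, h1, h2, hmem, hset⟩ : ∃ x y z, x < y ∧ y < z ∧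
        (x ∈ Finset.Icc 1 n ∧ y ∈ Finset.Icc 1 n ∧ z ∈ Finset.Icc 1 n) ∧
        ({a, b, c} : Finset ℕ) = {x, y, z} := by
      rcases lt_or_gt_of_ne hab with g1 | g1 <;>
        rcases lt_or_gt_of_ne hac with g2 | g2 <;>
          rcases lt_or_gt_of_ne hbc with g3 | g3
      · exact ⟨a, b, c, g1, g3, ⟨ha, hb, hc⟩, rfl⟩
      · exact ⟨a, c, b, g2, g3, ⟨ha, hc, hb⟩, e1 a b c⟩
      · exact (by omega : False).elim
      · exact ⟨c, a, b, g2, g1, ⟨hc, ha, hb⟩, (e1 a b c).trans (e2 a c b)⟩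
      · exact ⟨b, a, c, g1, g2, ⟨hb, ha, hc⟩, e2 a b c⟩
      · exact (by omega : False).elim
      · exact ⟨b, c, a, g3, g2, ⟨hb, hc, ha⟩, (e2 a b c).trans (e1 b a c)⟩
      · exact ⟨c, b, a, g3, g1, ⟨hc, hb, ha⟩, ((e1 a b c).trans (e2 a c b)).trans (e1 c a b)⟩
    refine ⟨(x, y, z), ?_, hset.symm⟩
    simp only [I4, Finset.mem_filter, Finset.mem_product]
    exact ⟨⟨hmem.1, hmem.2.1, hmem.2.2⟩, h1, h2⟩

def badF (n : ℕ) : Finset (Finset ℕ) :=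
  (({∅} ∪ (Finset.Icc 1 n).image (fun k => Finset.Icc 1 k))
    ∪ (I3 n).image (fun p => Finset.Icc (p.1 + 1) p.2))
    ∪ (I4 n).image (fun p => Finset.Icc 1 p.1 ∪ Finset.Icc (p.2.1 + 1) p.2.2)

lemma card_badF {n : ℕ} (hn : 4 ≤ n) :
    (badF n).card = 1 + n + n.choose 2 + n.choose 3 := by
  have hm2 : ∀ A ∈ (Finset.Icc 1 n).image (fun k => Finset.Icc 1 k), (1:ℕ) ∈ A := by
    intro A hA
    rw [Finset.mem_image] at hA
    obtain ⟨k, hk, rfl⟩ := hA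
    rw [Finset.mem_Icc] at hk
    exact Finset.mem_Icc.mpr ⟨le_rfl, hk.1⟩
  have hm3 : ∀ A ∈ (I3 n).image (fun p => Finset.Icc (p.1 + 1) p.2),
      (1:ℕ) ∉ A ∧ A.Nonempty := by
    intro A hA
    rw [Finset.mem_image] at hA
    obtain ⟨p, hp, rfl⟩ := hA
    simp only [I3, Finset.mem_filter, Finset.mem_product, Finset.mem_Icc] at hp
    constructor
    · rw [Finset.mem_Icc]; omega
    · exact ⟨p.1 + 1, Finset.mem_Icc.mpr ⟨le_rfl, by omega⟩⟩
  have hd12 : Disjoint ({∅} : Finset (Finset ℕ))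
      ((Finset.Icc 1 n).image (fun k => Finset.Icc 1 k)) := by
    rw [Finset.disjoint_left]
    intro A hA hA2
    rw [Finset.mem_singleton] at hA
    subst hA
    exact (Finset.notMem_empty 1) (hm2 _ hA2)
  have hd123 : Disjoint (({∅} : Finset (Finset ℕ))
      ∪ (Finset.Icc 1 n).image (fun k => Finset.Icc 1 k))
      ((I3 n).image (fun p => Finset.Icc (p.1 + 1) p.2)) := by
    rw [Finset.disjoint_left]
    intro A hA hA3
    obtain ⟨h1A, hAne⟩ := hm3 _ hA3
    rw [Finset.mem_union] at hA
    rcases hA with hA | hA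
    · rw [Finset.mem_singleton] at hA
      subst hA
      exact absurd hAne Finset.not_nonempty_empty
    · exact h1A (hm2 _ hA)
  have hd1234 : Disjoint ((({∅} : Finset (Finset ℕ))
      ∪ (Finset.Icc 1 n).image (fun k => Finset.Icc 1 k))
      ∪ (I3 n).image (fun p => Finset.Icc (p.1 + 1) p.2))
      ((I4 n).image (fun p => Finset.Icc 1 p.1 ∪ Finset.Icc (p.2.1 + 1) p.2.2)) := by
    rw [Finset.disjoint_left]
    intro A hA hA4
    rw [Finset.mem_image] at hA4
    obtain ⟨p, hp, rfl⟩ := hA4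
    simp only [I4, Finset.mem_filter, Finset.mem_product, Finset.mem_Icc] at hp
    obtain ⟨⟨hp1, hp2, hp3⟩, hlt1, hlt2⟩ := hp
    have h1mem : (1:ℕ) ∈ Finset.Icc 1 p.1 ∪ Finset.Icc (p.2.1+1) p.2.2 :=
      Finset.mem_union_left _ (Finset.mem_Icc.mpr ⟨le_rfl, hp1.1⟩)
    rw [Finset.mem_union, Finset.mem_union] at hA
    rcases hA with (hA | hA) | hA
    · rw [Finset.mem_singleton] at hA
      exact (Finset.notMem_empty 1) (hA ▸ h1mem)
    · rw [Finset.mem_image] at hA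
      obtain ⟨k, hk, hAk⟩ := hA
      rw [Finset.mem_Icc] at hk
      have hd : p.2.2 ∈ Finset.Icc 1 k := by
        rw [hAk]
        exact Finset.mem_union_right _ (Finset.mem_Icc.mpr ⟨by omega, le_rfl⟩)
      rw [Finset.mem_Icc] at hd
      have ht1 : p.1 + 1 ∈ Finset.Icc 1 k := Finset.mem_Icc.mpr ⟨by omega, by omega⟩
      rw [hAk, Finset.mem_union, Finset.mem_Icc, Finset.mem_Icc] at ht1
      omega
    · exact (hm3 _ hA).1 h1mem
  have hinj2 : Set.InjOn (fun k => Finset.Icc 1 k) (Finset.Icc 1 n) := by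
    intro a ha b hb he
    simp only [Finset.coe_Icc, Set.mem_Icc] at ha hb
    simp only at he
    have h1 : a ∈ Finset.Icc 1 b := by rw [← he]; exact Finset.mem_Icc.mpr ⟨ha.1, le_rfl⟩
    have h2 : b ∈ Finset.Icc 1 a := by rw [he]; exact Finset.mem_Icc.mpr ⟨hb.1, le_rfl⟩
    rw [Finset.mem_Icc] at h1 h2
    omega
  have hinj3 : Set.InjOn (fun p : ℕ × ℕ => Finset.Icc (p.1 + 1) p.2) (I3 n) := by
    intro p hp q hq he
    simp only [Finset.mem_coe, I3, Finset.mem_filter, Finset.mem_product, Finset.mem_Icc]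
      at hp hq
    simp only at he
    have h1 : p.1 + 1 ∈ Finset.Icc (q.1+1) q.2 := by
      rw [← he]; exact Finset.mem_Icc.mpr ⟨le_rfl, by omega⟩
    have h2 : q.1 + 1 ∈ Finset.Icc (p.1+1) p.2 := by
      rw [he]; exact Finset.mem_Icc.mpr ⟨le_rfl, by omega⟩
    have h3 : p.2 ∈ Finset.Icc (q.1+1) q.2 := by
      rw [← he]; exact Finset.mem_Icc.mpr ⟨by omega, le_rfl⟩
    have h4 : q.2 ∈ Finset.Icc (p.1+1) p.2 := by
      rw [he]; exact Finset.mem_Icc.mpr ⟨by omega, le_rfl⟩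
    rw [Finset.mem_Icc] at h1 h2 h3 h4
    have hpq : p.1 = q.1 ∧ p.2 = q.2 := by omega
    exact Prod.ext hpq.1 hpq.2
  have hinj4 : Set.InjOn (fun p : ℕ × ℕ × ℕ => Finset.Icc 1 p.1 ∪ Finset.Icc (p.2.1 + 1) p.2.2)
      (I4 n) := by
    intro p hp q hq he
    simp only [Finset.mem_coe, I4, Finset.mem_filter, Finset.mem_product, Finset.mem_Icc]
      at hp hq
    obtain ⟨⟨hpa, hpb, hpc⟩, hp1, hp2⟩ := hp
    obtain ⟨⟨hqa, hqb, hqc⟩, hq1, hq2⟩ := hq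
    simp only at he
    have key := fun z => Finset.ext_iff.mp he z
    simp only [Finset.mem_union, Finset.mem_Icc] at key
    have k1 := key p.1
    have k2 := key (p.1 + 1)
    have k3 := key q.1
    have k4 := key (q.1 + 1)
    have k5 := key p.2.2
    have k6 := key q.2.2
    have k7 := key (p.2.1 + 1)
    have k8 := key (q.2.1 + 1)
    have k9 := key p.2.1
    have k10 := key q.2.1
    have hpq : p.1 = q.1 ∧ p.2.1 = q.2.1 ∧ p.2.2 = q.2.2 := by omega
    exact Prod.ext hpq.1 (Prod.ext hpq.2.1 hpq.2.2)
  rw [badF]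
  rw [Finset.card_union_of_disjoint hd1234, Finset.card_union_of_disjoint hd123,
    Finset.card_union_of_disjoint hd12]
  rw [Finset.card_singleton, Finset.card_image_of_injOn hinj2,
    Finset.card_image_of_injOn hinj3, Finset.card_image_of_injOn hinj4,
    card_I3, card_I4, Nat.card_Icc, Nat.add_sub_cancel]

lemma hole_start {S : Finset ℕ} {h : ℕ} (hh : h ∉ S) (hex : ∃ z ∈ S, h < z) :
    ∃ y ∈ S, y - 1 ∉ S ∧ h < y ∧ ∀ z ∈ S, h < z → y ≤ z := by
  have hne : {z | z ∈ S ∧ h < z}.Nonempty := by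
    obtain ⟨z, hz1, hz2⟩ := hex
    exact ⟨z, hz1, hz2⟩
  obtain ⟨hy1, hy2⟩ := Nat.sInf_mem hne
  refine ⟨sInf {z | z ∈ S ∧ h < z}, hy1, ?_, hy2, fun z hz hz' => Nat.sInf_le ⟨hz, hz'⟩⟩
  intro hmem
  by_cases hc : h = sInf {z | z ∈ S ∧ h < z} - 1
  · exact hh (hc ▸ hmem)
  · have h2 : h < sInf {z | z ∈ S ∧ h < z} - 1 := by omega
    have := Nat.sInf_le (show sInf {z | z ∈ S ∧ h < z} - 1 ∈ {z | z ∈ S ∧ h < z}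
      from ⟨hmem, h2⟩)
    omega

lemma min_start {n : ℕ} {S : Finset ℕ} (hS : S ⊆ Finset.Icc 1 n) (hne : S.Nonempty) :
    S.min' hne ∈ S.filter (fun x => x - 1 ∉ S) := by
  rw [Finset.mem_filter]
  refine ⟨S.min'_mem hne, fun hmem => ?_⟩
  have h1 := S.min'_le _ hmem
  have h2 := (mem_Icc_of_subset hS (S.min'_mem hne)).1
  omega

lemma exists_hole {S : Finset ℕ} (hne : S.Nonempty)
    (hni : S ≠ Finset.Icc (S.min' hne) (S.max' hne)) :
    ∃ h, h ∉ S ∧ S.min' hne ≤ h ∧ h < S.max' hne := by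
  by_contra hcon
  push_neg at hcon
  apply hni
  apply Finset.Subset.antisymm
  · intro z hz
    rw [Finset.mem_Icc]
    exact ⟨S.min'_le z hz, S.le_max' z hz⟩
  · intro z hz
    rw [Finset.mem_Icc] at hz
    by_contra hzS
    have h1 := hcon z hzS hz.1
    have hmax := S.max'_mem hne
    have h2 : z = S.max' hne := le_antisymm hz.2 h1
    exact hzS (h2 ▸ hmax)

lemma eq_Icc_of_Bk_le_one {n : ℕ} {S : Finset ℕ} (hS : S ⊆ Finset.Icc 1 n)
    (hne : S.Nonempty) (hB : Bk S ≤ 1) :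
    S = Finset.Icc (S.min' hne) (S.max' hne) := by
  by_contra hS'
  obtain ⟨h, hh1, hh2, hh3⟩ := exists_hole hne hS'
  obtain ⟨y, hyS, hyB, hyh, _⟩ := hole_start hh1 ⟨S.max' hne, S.max'_mem hne, hh3⟩
  have hymin : S.min' hne ≠ y := by omega
  have hsub : ({S.min' hne, y} : Finset ℕ) ⊆ S.filter (fun x => x - 1 ∉ S) := by
    intro z hz
    rw [Finset.mem_insert, Finset.mem_singleton] at hz
    rcases hz with rfl | rfl
    · exact min_start hS hne
    · exact Finset.mem_filter.mpr ⟨hyS, hyB⟩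
  have hcard := Finset.card_le_card hsub
  rw [Finset.card_pair hymin] at hcard
  unfold Bk at hB
  omega

lemma badF_eq {n : ℕ} (hn : 4 ≤ n) :
    (Finset.Icc 1 n).powerset.filter (fun S => ¬ goodP S) = badF n := by
  apply Finset.Subset.antisymm
  · intro S hSm
    rw [Finset.mem_filter, Finset.mem_powerset] at hSm
    obtain ⟨hsub, hbad⟩ := hSm
    rcases Finset.eq_empty_or_nonempty S with rfl | hne
    · rw [badF]
      simp
    · have ha1 : 1 ≤ S.min' hne := (mem_Icc_of_subset hsub (S.min'_mem hne)).1
      have hbn : S.max' hne ≤ n := (mem_Icc_of_subset hsub (S.max'_mem hne)).2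
      have hab : S.min' hne ≤ S.max' hne := S.min'_le _ (S.max'_mem hne)
      by_cases h1S : 1 ∈ S
      · have ha : S.min' hne = 1 := le_antisymm (S.min'_le _ h1S) ha1
        unfold goodP at hbad
        rw [if_pos h1S] at hbad
        have hB2 : Bk S ≤ 2 := by omega
        by_cases hInt : S = Finset.Icc 1 (S.max' hne)
        · rw [badF]
          simp only [Finset.mem_union, Finset.mem_singleton, Finset.mem_image]
          refine Or.inl (Or.inl (Or.inr ⟨S.max' hne, ?_, hInt.symm⟩))
          rw [Finset.mem_Icc]
          omega
        · have hni : S ≠ Finset.Icc (S.min' hne) (S.max' hne) := by rw [ha]; exact hInt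
          obtain ⟨h, hh1, hh2, hh3⟩ := exists_hole hne hni
          obtain ⟨y, hyS, hyB, hyh, hymin2⟩ := hole_start hh1
            ⟨S.max' hne, S.max'_mem hne, hh3⟩
          have hy2 : 2 ≤ y := by omega
          have hfil : S.filter (fun x => x - 1 ∉ S) = {1, y} := by
            have hsub2 : ({1, y} : Finset ℕ) ⊆ S.filter (fun x => x - 1 ∉ S) := by
              intro z hz
              rw [Finset.mem_insert, Finset.mem_singleton] at hz
              rcases hz with rfl | rfl
              · have := min_start hsub hne
                rwa [ha] at this
              · exact Finset.mem_filter.mpr ⟨hyS, hyB⟩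
            refine (Finset.eq_of_subset_of_card_le hsub2 ?_).symm
            rw [Finset.card_pair (by omega)]
            unfold Bk at hB2
            exact hB2
          have htne : {x | x + 1 ∉ S}.Nonempty :=
            ⟨S.max' hne, fun hmem => by have := S.le_max' _ hmem; omega⟩
          have ht1 : sInf {x | x + 1 ∉ S} + 1 ∉ S := Nat.sInf_mem htne
          have htlow : ∀ z, 1 ≤ z → z ≤ sInf {x | x + 1 ∉ S} → z ∈ S := by
            intro z h1 h2
            have h3 : z - 1 ∉ {x | x + 1 ∉ S} :=
              Nat.notMem_of_lt_sInf (show z - 1 < sInf {x | x + 1 ∉ S} by omega)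
            simp only [Set.mem_setOf_eq, not_not] at h3
            have e : z - 1 + 1 = z := by omega
            rwa [e] at h3
          have ht1' : 1 ≤ sInf {x | x + 1 ∉ S} := by
            by_contra hc
            have h0 : sInf {x | x + 1 ∉ S} = 0 := by omega
            rw [h0] at ht1
            exact ht1 (by simpa using h1S)
          have htS : sInf {x | x + 1 ∉ S} ∈ S := htlow _ ht1' le_rfl
          have htb : sInf {x | x + 1 ∉ S} ≤ S.max' hne := S.le_max' _ htS
          have hty : sInf {x | x + 1 ∉ S} + 2 ≤ y := by
            have hne1 : y ≠ sInf {x | x + 1 ∉ S} + 1 := fun heq => ht1 (heq ▸ hyS)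
            have hne2 : ¬ y ≤ sInf {x | x + 1 ∉ S} := fun hle =>
              hyB (htlow (y - 1) (by omega) (by omega))
            omega
          have hyb : y ≤ S.max' hne := S.le_max' _ hyS
          have hSeq : S = Finset.Icc 1 (sInf {x | x + 1 ∉ S}) ∪ Finset.Icc y (S.max' hne) := by
            apply Finset.Subset.antisymm
            · intro z hz
              rw [Finset.mem_union, Finset.mem_Icc, Finset.mem_Icc]
              have hz1 : 1 ≤ z := by
                have := S.min'_le _ hz
                omega
              have hzb : z ≤ S.max' hne := S.le_max' _ hz
              by_cases hzt : z ≤ sInf {x | x + 1 ∉ S}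
              · left; exact ⟨hz1, hzt⟩
              · right
                refine ⟨?_, hzb⟩
                have hwne : {u | u ∈ S ∧ sInf {x | x + 1 ∉ S} < u}.Nonempty :=
                  ⟨z, hz, by omega⟩
                obtain ⟨hw1, hw2⟩ := Nat.sInf_mem hwne
                have hwstart : sInf {u | u ∈ S ∧ sInf {x | x + 1 ∉ S} < u} - 1 ∉ S := by
                  intro hmem
                  by_cases hc : sInf {u | u ∈ S ∧ sInf {x | x + 1 ∉ S} < u} - 1
                      = sInf {x | x + 1 ∉ S}
                  · exact ht1 (by
                      have e : sInf {x | x + 1 ∉ S} + 1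
                          = sInf {u | u ∈ S ∧ sInf {x | x + 1 ∉ S} < u} := by omega
                      rw [e]; exact hw1)
                  · have hmm : sInf {u | u ∈ S ∧ sInf {x | x + 1 ∉ S} < u} - 1
                        ∈ {u | u ∈ S ∧ sInf {x | x + 1 ∉ S} < u} := ⟨hmem, by omega⟩
                    have := Nat.sInf_le hmm
                    omega
                have hwfil : sInf {u | u ∈ S ∧ sInf {x | x + 1 ∉ S} < u}
                    ∈ S.filter (fun x => x - 1 ∉ S) := Finset.mem_filter.mpr ⟨hw1, hwstart⟩
                rw [hfil, Finset.mem_insert, Finset.mem_singleton] at hwfil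
                have hwy : sInf {u | u ∈ S ∧ sInf {x | x + 1 ∉ S} < u} = y := by
                  rcases hwfil with hq | hq
                  · omega
                  · exact hq
                have := Nat.sInf_le (show z ∈ {u | u ∈ S ∧ sInf {x | x + 1 ∉ S} < u}
                  from ⟨hz, by omega⟩)
                omega
            · intro z hz
              rw [Finset.mem_union, Finset.mem_Icc, Finset.mem_Icc] at hz
              rcases hz with hz | hz
              · exact htlow z hz.1 hz.2
              · by_contra hzS
                have hzb : z < S.max' hne := by
                  have hmax := S.max'_mem hne
                  rcases eq_or_lt_of_le hz.2 with heq | hlt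
                  · exact absurd (heq ▸ hmax) hzS
                  · exact hlt
                obtain ⟨y', hy'S, hy'B, hy'h, _⟩ := hole_start hzS
                  ⟨S.max' hne, S.max'_mem hne, hzb⟩
                have hy'fil : y' ∈ S.filter (fun x => x - 1 ∉ S) :=
                  Finset.mem_filter.mpr ⟨hy'S, hy'B⟩
                rw [hfil, Finset.mem_insert, Finset.mem_singleton] at hy'fil
                omega
          rw [badF]
          simp only [Finset.mem_union]
          refine Or.inr ?_
          rw [Finset.mem_image]
          refine ⟨(sInf {x | x + 1 ∉ S}, y - 1, S.max' hne), ?_, ?_⟩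
          · simp only [I4, Finset.mem_filter, Finset.mem_product, Finset.mem_Icc]
            exact ⟨⟨⟨ht1', by omega⟩, ⟨by omega, by omega⟩, ⟨by omega, hbn⟩⟩,
              by omega, by omega⟩
          · have e : y - 1 + 1 = y := by omega
            simp only
            rw [e]
            exact hSeq.symm
      · unfold goodP at hbad
        rw [if_neg h1S] at hbad
        have hB1 : Bk S ≤ 1 := by omega
        have ha2 : 2 ≤ S.min' hne := by
          have : S.min' hne ≠ 1 := fun heq => h1S (heq ▸ S.min'_mem hne)
          omega
        have hSI := eq_Icc_of_Bk_le_one hsub hne hB1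
        rw [badF]
        simp only [Finset.mem_union]
        refine Or.inl (Or.inr ?_)
        rw [Finset.mem_image]
        refine ⟨(S.min' hne - 1, S.max' hne), ?_, ?_⟩
        · simp only [I3, Finset.mem_filter, Finset.mem_product, Finset.mem_Icc]
          exact ⟨⟨⟨by omega, by omega⟩, by omega, hbn⟩, by omega⟩
        · have e : S.min' hne - 1 + 1 = S.min' hne := by omega
          simp only
          rw [e]
          exact hSI.symm
  · intro S hS
    rw [Finset.mem_filter, Finset.mem_powerset]
    rw [badF] at hS
    simp only [Finset.mem_union, Finset.mem_singleton, Finset.mem_image] at hS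
    rcases hS with ((rfl | ⟨kk, hk, rfl⟩) | ⟨p, hp, rfl⟩) | ⟨p, hp, rfl⟩
    · refine ⟨Finset.empty_subset _, ?_⟩
      unfold goodP
      rw [Bk_empty]
      simp
    · rw [Finset.mem_Icc] at hk
      refine ⟨Finset.Icc_subset_Icc le_rfl hk.2, ?_⟩
      unfold goodP
      rw [Bk_Icc le_rfl hk.1, if_pos (Finset.mem_Icc.mpr ⟨le_rfl, hk.1⟩)]
      omega
    · simp only [I3, Finset.mem_filter, Finset.mem_product, Finset.mem_Icc] at hp
      obtain ⟨⟨h1, h2⟩, h3⟩ := hp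
      refine ⟨Finset.Icc_subset_Icc (by omega) h2.2, ?_⟩
      unfold goodP
      rw [Bk_Icc (by omega) (by omega), if_neg (by rw [Finset.mem_Icc]; omega)]
      omega
    · simp only [I4, Finset.mem_filter, Finset.mem_product, Finset.mem_Icc] at hp
      obtain ⟨⟨ha, hb, hc⟩, h1, h2⟩ := hp
      refine ⟨Finset.union_subset (Finset.Icc_subset_Icc le_rfl (by omega))
        (Finset.Icc_subset_Icc (by omega) hc.2), ?_⟩
      unfold goodP
      rw [Bk_two ha.1 (by omega) (by omega),
        if_pos (Finset.mem_union_left _ (Finset.mem_Icc.mpr ⟨le_rfl, ha.1⟩))]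
      omega

lemma choose_two_mul (m : ℕ) : 2 * (m + 1).choose 2 = (m + 1) * m := by
  induction m with
  | zero => decide
  | succ m ih =>
    rw [Nat.choose_succ_succ (m + 1) 1, Nat.choose_one_right, Nat.mul_add, ih]
    ring

lemma choose_three_mul (m : ℕ) : 6 * (m + 2).choose 3 = (m + 2) * (m + 1) * m := by
  induction m with
  | zero => decide
  | succ m ih =>
    calc 6 * (m + 3).choose 3 = 3 * (2 * ((m + 2).choose 2)) + 6 * ((m + 2).choose 3) := by
          rw [Nat.choose_succ_succ (m + 2) 2]; ring
      _ = 3 * ((m + 2) * (m + 1)) + (m + 2) * (m + 1) * m := by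
          rw [choose_two_mul (m + 1), ih]
      _ = (m + 3) * (m + 2) * (m + 1) := by ring


theorem card_rdstar (n : ℕ) (hn : 4 ≤ n) :
    (RDstar n).ncard = 2 ^ n - (n ^ 3 + 5 * n + 6) / 6 := by
  have h1 : (RDstar n).ncard = (goodF n).card := by
    rw [rdstar_eq hn]
    rw [Set.ncard_image_of_injOn (fun S hS T hT h =>
      dec_injOn S (by exact_mod_cast hS) T (by exact_mod_cast hT) h)]
    exact Set.ncard_coe_finset _
  have h2 : (goodF n).card + (badF n).card = 2 ^ n := by
    rw [← badF_eq hn, goodF]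
    rw [Finset.card_filter_add_card_filter_not]
    rw [Finset.card_powerset, Nat.card_Icc, Nat.add_sub_cancel]
  obtain ⟨m, rfl⟩ : ∃ m, n = m + 4 := ⟨n - 4, by omega⟩
  have hc2 : 2 * (m + 4).choose 2 = (m + 4) * (m + 3) := choose_two_mul (m + 3)
  have hc3 : 6 * (m + 4).choose 3 = (m + 4) * (m + 3) * (m + 2) := choose_three_mul (m + 2)
  have h3 : (badF (m + 4)).card = 1 + (m + 4) + (m + 4).choose 2 + (m + 4).choose 3 :=
    card_badF hn
  have h4 : ((m + 4) ^ 3 + 5 * (m + 4) + 6) = 6 * (badF (m + 4)).card := by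
    rw [h3]
    have he : 6 * (1 + (m + 4) + (m + 4).choose 2 + (m + 4).choose 3)
        = 6 + 6 * (m + 4) + 3 * (2 * ((m + 4).choose 2)) + 6 * ((m + 4).choose 3) := by
      ring
    rw [he, hc2, hc3]
    ring
  rw [h1, h4, Nat.mul_div_cancel_left _ (by norm_num : 0 < 6)]
  omega

end ORDPaper
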